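/- Every frame function on the set of effects in d dimensions is continuous (with respect to the Hilbert–Schmidt norm) on the entire set of effects. -/

import Mathlib

open Matrix Finset ComplexOrder

def IsEffect {d : ℕ} (E : Matrix (Fin d) (Fin d) ℂ) : Prop :=
  E.PosSemidef ∧ (1 - E).PosSemidef

def IsFrameFunction {d : ℕ} (f : Matrix (Fin d) (Fin d) ℂ → ℝ) : Prop :=
  (∀ E, IsEffect E → f E ∈ Set.Icc (0 : ℝ) 1) ∧
  ∀ (n : ℕ) (E : Fin n → Matrix (Fin d) (Fin d) ℂ),
    (∀ j, IsEffect (E j)) → (∑ j, E j = 1) → ∑ j, f (E j) = 1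

noncomputable def hsNorm {d : ℕ} (A : Matrix (Fin d) (Fin d) ℂ) : ℝ :=
  Real.sqrt ((Aᴴ * A).trace.re)

def IsProjection {d : ℕ} (P : Matrix (Fin d) (Fin d) ℂ) : Prop :=
  P.IsHermitian ∧ P * P = P

section Helpers

variable {d : ℕ}

local notation "Mat" => Matrix (Fin d) (Fin d) ℂ

lemma psd_smul {A : Mat} (c : ℝ) (hc : 0 ≤ c) (hA : A.PosSemidef) :
    (((c : ℝ) : ℂ) • A).PosSemidef := by
  constructor
  · unfold Matrix.IsHermitian
    rw [conjTranspose_smul, hA.1.eq]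
    norm_num
  · intro x
    simp only [Matrix.smul_apply, smul_eq_mul]
    convert mul_nonneg (Complex.zero_le_real.mpr hc) (hA.2 x) using 1
    rw [Finsupp.mul_sum]
    refine Finsupp.sum_congr fun i _ => ?_
    rw [Finsupp.mul_sum]
    refine Finsupp.sum_congr fun j _ => ?_
    ring

lemma effect_one : IsEffect (1 : Mat) :=
  ⟨Matrix.PosDef.one.posSemidef, by simpa using Matrix.PosSemidef.zero⟩

lemma effect_smul_one {t : ℝ} (h0 : 0 ≤ t) (h1 : t ≤ 1) :
    IsEffect (((t : ℝ) : ℂ) • (1 : Mat)) := by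
  refine ⟨psd_smul t h0 effect_one.1, ?_⟩
  have : (1 : Mat) - ((t : ℝ) : ℂ) • 1 = (((1 - t : ℝ)) : ℂ) • 1 := by
    push_cast
    rw [sub_smul, one_smul]
  rw [this]
  exact psd_smul _ (by linarith) effect_one.1

variable {f : Matrix (Fin d) (Fin d) ℂ → ℝ} (hf : IsFrameFunction f)

include hf

lemma f_one : f 1 = 1 := by
  have := hf.2 1 (fun _ => 1) (fun _ => effect_one) (by simp)
  simpa using this

lemma f_compl {E : Mat} (hE : IsEffect E) : f E + f (1 - E) = 1 := by
  have h := hf.2 2 ![E, 1 - E] ?_ ?_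
  · simpa [Fin.sum_univ_two] using h
  · intro j
    fin_cases j
    · exact hE
    · exact ⟨hE.2, by simpa using hE.1⟩
  · simp [Fin.sum_univ_two]

lemma f_zero : f 0 = 0 := by
  have h := f_compl hf effect_one
  rw [f_one hf] at h
  simpa using h

lemma f_add {A B : Mat} (hA : IsEffect A) (hB : IsEffect B) (hAB : IsEffect (A + B)) :
    f (A + B) = f A + f B := by
  have hC : IsEffect (1 - (A + B)) := ⟨hAB.2, by simpa using hAB.1⟩
  have h3 := hf.2 3 ![A, B, 1 - (A + B)] ?_ ?_
  · have h2 := f_compl hf hAB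
    rw [Fin.sum_univ_three] at h3
    simp only [Matrix.cons_val_zero, Matrix.cons_val_one, Matrix.head_cons] at h3
    have : f (Matrix.vecCons A ![B, 1 - (A + B)] 2) = f (1 - (A + B)) := by rfl
    rw [this] at h3
    linarith
  · intro j
    fin_cases j
    · exact hA
    · exact hB
    · exact hC
  · rw [Fin.sum_univ_three]
    simp only [Matrix.cons_val_zero, Matrix.cons_val_one, Matrix.head_cons]
    have : (Matrix.vecCons A ![B, 1 - (A + B)] 2) = 1 - (A + B) := by rfl
    rw [this]
    abel

lemma f_nonneg {E : Mat} (hE : IsEffect E) : 0 ≤ f E := (hf.1 E hE).1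

lemma f_mono {X Y : Mat} (hX : IsEffect X) (hY : IsEffect Y)
    (hXY : (Y - X).PosSemidef) : f X ≤ f Y := by
  have hD : IsEffect (Y - X) := by
    refine ⟨hXY, ?_⟩
    have : (1 : Mat) - (Y - X) = (1 - Y) + X := by abel
    rw [this]
    exact hY.2.add hX.1
  have hYeq : f Y = f X + f (Y - X) := by
    have h := f_add hf hX hD (by
      have : X + (Y - X) = Y := by abel
      rw [this]; exact hY)
    have : X + (Y - X) = Y := by abel
    rw [this] at h
    exact h
  linarith [f_nonneg hf hD]

lemma f_nsmul {Y : Mat} (hY : Y.PosSemidef) {n : ℕ}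
    (h1 : ((1 : Mat) - n • Y).PosSemidef) :
    ∀ k, k ≤ n → IsEffect (k • Y) ∧ f (k • Y) = k * f Y := by
  have hkY : ∀ m : ℕ, (m • Y).PosSemidef := by
    intro m
    induction m with
    | zero => simpa using Matrix.PosSemidef.zero
    | succ m ih => rw [succ_nsmul]; exact ih.add hY
  have heff : ∀ k, k ≤ n → IsEffect (k • Y) := by
    intro k hk
    refine ⟨hkY k, ?_⟩
    have hnk : n • Y = k • Y + (n - k) • Y := by
      rw [← add_nsmul, Nat.add_sub_cancel' hk]
    have : (1 : Mat) - k • Y = ((1 : Mat) - n • Y) + (n - k) • Y := by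
      rw [hnk]; abel
    rw [this]
    exact h1.add (hkY _)
  have hval : ∀ k, k ≤ n → f (k • Y) = k * f Y := by
    intro k
    induction k with
    | zero => intro _; simp [f_zero hf]
    | succ k ih =>
      intro hk
      have hk' : k ≤ n := Nat.le_of_succ_le hk
      have h1n : 1 ≤ n := le_trans (Nat.succ_le_succ (Nat.zero_le k)) hk
      have hYeff : IsEffect Y := by simpa using heff 1 h1n
      have hsum : IsEffect (k • Y + Y) := by
        rw [← succ_nsmul]; exact heff (k + 1) hk
      rw [succ_nsmul, f_add hf (heff k hk') hYeff hsum, ih hk']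
      push_cast
      ring
  exact fun k hk => ⟨heff k hk, hval k hk⟩

omit hf in
lemma scale_eq {n : ℕ} (hn : 1 ≤ n) (X : Mat) :
    n • ((((n : ℝ)⁻¹ : ℝ) : ℂ) • X) = X := by
  rw [← Nat.cast_smul_eq_nsmul ℂ, smul_smul]
  have hne : ((n : ℝ)) ≠ 0 := by positivity
  have : ((n : ℕ) : ℂ) * (((n : ℝ)⁻¹ : ℝ) : ℂ) = 1 := by
    push_cast
    rw [mul_inv_cancel₀ (by exact_mod_cast hne)]
  rw [this, one_smul]

lemma f_scale {n : ℕ} (hn : 1 ≤ n) {X : Mat} (hX : IsEffect X) :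
    IsEffect ((((1 - (n : ℝ)⁻¹ : ℝ)) : ℂ) • X) ∧
    f ((((1 - (n : ℝ)⁻¹ : ℝ)) : ℂ) • X) = (1 - (n : ℝ)⁻¹) * f X ∧
    f ((((n : ℝ)⁻¹ : ℝ) : ℂ) • X) = (n : ℝ)⁻¹ * f X := by
  have hne : ((n : ℝ)) ≠ 0 := by positivity
  set Y : Mat := (((n : ℝ)⁻¹ : ℝ) : ℂ) • X with hYdef
  have hY : Y.PosSemidef := psd_smul _ (by positivity) hX.1
  have hnY : n • Y = X := scale_eq hn X
  have h1 : ((1 : Mat) - n • Y).PosSemidef := by rw [hnY]; exact hX.2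
  have hmain := f_nsmul hf hY h1
  have hXval : f X = n * f Y := by
    have := (hmain n le_rfl).2
    rwa [hnY] at this
  have hYval : f Y = (n : ℝ)⁻¹ * f X := by
    rw [hXval]
    field_simp
  have hbridge : (n - 1) • Y = (((1 - (n : ℝ)⁻¹ : ℝ)) : ℂ) • X := by
    rw [← Nat.cast_smul_eq_nsmul ℂ, hYdef, smul_smul]
    congr 1
    push_cast [Nat.cast_sub hn]
    rw [sub_mul, mul_inv_cancel₀ (by exact_mod_cast hne)]
    ring
  have hk := hmain (n - 1) (Nat.sub_le n 1)
  refine ⟨?_, ?_, hYval⟩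
  · rw [← hbridge]; exact hk.1
  · rw [← hbridge, hk.2, hYval, Nat.cast_sub hn]
    push_cast
    field_simp

lemma key_ineq {n : ℕ} (hn : 2 ≤ n) {E E₀ P : Mat}
    (hE : IsEffect E) (hE₀ : IsEffect E₀) (hP : P.PosSemidef)
    (hPt : (((((n : ℝ)⁻¹ : ℝ)) : ℂ) • 1 - P).PosSemidef)
    (hPD : (P - (E - E₀)).PosSemidef) :
    f E ≤ f E₀ + ((n : ℝ) - 1)⁻¹ := by
  have hn1 : 1 ≤ n := le_trans one_le_two hn
  have hnR : (2 : ℝ) ≤ (n : ℝ) := by exact_mod_cast hn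
  have ht0 : (0 : ℝ) ≤ (n : ℝ)⁻¹ := by positivity
  have ht1 : ((n : ℝ)⁻¹) < 1 := inv_lt_one_of_one_lt₀ (by linarith)
  have hs0 : (0 : ℝ) ≤ 1 - (n : ℝ)⁻¹ := by linarith
  set tC : ℂ := ((((n : ℝ)⁻¹ : ℝ)) : ℂ) with htC
  set sC : ℂ := (((1 - (n : ℝ)⁻¹ : ℝ)) : ℂ) with hsC
  set N : Mat := P - (E - E₀) with hNdef
  have hN : N.PosSemidef := hPD
  have hsum : sC + tC = 1 := by rw [htC, hsC]; push_cast; ring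
  have hone : sC • (1 : Mat) + tC • 1 = 1 := by rw [← add_smul, hsum, one_smul]
  have htP : (tC • P).PosSemidef := by rw [htC]; exact psd_smul _ ht0 hP
  have hs1E0 : (sC • (1 - E₀)).PosSemidef := by rw [hsC]; exact psd_smul _ hs0 hE₀.2
  have hPeff : IsEffect P := by
    refine ⟨hP, ?_⟩
    have hid : (1 : Mat) - P = sC • 1 + (tC • 1 - P) := by
      nth_rewrite 1 [← hone]; abel
    rw [hid]
    exact Matrix.PosSemidef.add (by rw [hsC]; exact psd_smul _ hs0 effect_one.1) hPt
  have hteff : IsEffect (tC • (1 : Mat)) := by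
    rw [htC]; exact effect_smul_one ht0 (le_of_lt ht1)
  obtain ⟨hSE, hfSE, -⟩ := f_scale hf hn1 hE
  obtain ⟨hSE0, hfSE0, -⟩ := f_scale hf hn1 hE₀
  obtain ⟨hSP, hfSP, -⟩ := f_scale hf hn1 hPeff
  obtain ⟨-, -, hft1⟩ := f_scale hf hn1 effect_one
  rw [← hsC] at hSE hfSE hSE0 hfSE0 hSP hfSP
  rw [← htC] at hft1
  rw [f_one hf, mul_one] at hft1
  have hfP : f P ≤ (n : ℝ)⁻¹ := by
    have h := f_mono hf hPeff hteff hPt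
    rwa [hft1] at h
  have hZ1 : (1 : Mat) - (sC • E₀ + sC • P) = sC • (1 - E₀) + (tC • 1 - P) + tC • P := by
    rw [hsC, htC]; push_cast; module
  have hZpsd : (sC • E₀ + sC • P).PosSemidef :=
    Matrix.PosSemidef.add (by rw [hsC]; exact psd_smul _ hs0 hE₀.1)
      (by rw [hsC]; exact psd_smul _ hs0 hP)
  have hZeff : IsEffect (sC • E₀ + sC • P) :=
    ⟨hZpsd, by rw [hZ1]; exact (hs1E0.add hPt).add htP⟩
  have hEq : sC • E + sC • N = sC • E₀ + sC • P := by
    rw [hNdef]; module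
  have hSN : IsEffect (sC • N) := by
    refine ⟨by rw [hsC]; exact psd_smul _ hs0 hN, ?_⟩
    have hid : (1 : Mat) - sC • N = sC • E + (sC • (1 - E₀) + ((tC • 1 - P) + tC • P)) := by
      rw [hNdef, hsC, htC]; push_cast; module
    rw [hid]
    exact hSE.1.add (hs1E0.add (hPt.add htP))
  have hadd1 : f (sC • E₀ + sC • P) = f (sC • E₀) + f (sC • P) := f_add hf hSE0 hSP hZeff
  have hadd2 : f (sC • E) + f (sC • N) = f (sC • E₀) + f (sC • P) := by
    rw [← hadd1, ← hEq]
    exact (f_add hf hSE hSN (by rw [hEq]; exact hZeff)).symm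
  have hfN0 : 0 ≤ f (sC • N) := f_nonneg hf hSN
  rw [hfSE, hfSE0, hfSP] at hadd2
  have h1t : (0 : ℝ) < 1 - (n : ℝ)⁻¹ := by
    have : ((n : ℝ)⁻¹) < 1 := ht1
    linarith
  have hab : f E ≤ f E₀ + f P := by
    have hmul : (1 - (n : ℝ)⁻¹) * f E ≤ (1 - (n : ℝ)⁻¹) * (f E₀ + f P) := by
      nlinarith [hadd2, hfN0]
    exact le_of_mul_le_mul_left hmul h1t
  have htle : ((n : ℝ)⁻¹) ≤ ((n : ℝ) - 1)⁻¹ := by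
    have h1 : (0 : ℝ) < (n : ℝ) - 1 := by linarith
    have h2 : (n : ℝ) - 1 ≤ (n : ℝ) := by linarith
    exact inv_anti₀ h1 h2
  linarith

omit hf in
lemma eig_bound {D : Mat} (hD : D.IsHermitian) (i : Fin d) :
    |hD.eigenvalues i| ≤ hsNorm D := by
  set V : Mat := (hD.eigenvectorUnitary : Mat) with hV
  have hVV' : star V * V = 1 := mem_unitaryGroup_iff'.mp hD.eigenvectorUnitary.2
  set L : Mat := diagonal (RCLike.ofReal ∘ hD.eigenvalues) with hL
  have hspec : D = V * L * star V := hD.spectral_theorem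
  have htr : (Dᴴ * D).trace = ((∑ j, (hD.eigenvalues j) ^ 2 : ℝ) : ℂ) := by
    rw [hD.eq]
    have hmm : (V * L * star V) * (V * L * star V) = V * (L * L) * star V := by
      have h1 : star V * (V * L * star V) = L * star V := by
        rw [← mul_assoc, ← mul_assoc, hVV', one_mul]
      calc (V * L * star V) * (V * L * star V)
          = V * L * (star V * (V * L * star V)) := by rw [mul_assoc]
        _ = V * L * (L * star V) := by rw [h1]
        _ = V * (L * L) * star V := by simp [mul_assoc]
    conv_lhs => rw [hspec]
    rw [hmm, trace_mul_cycle, hVV', one_mul, hL, diagonal_mul_diagonal,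
      trace_diagonal]
    push_cast
    exact Finset.sum_congr rfl fun j _ => by simp [Function.comp]; ring
  have hre : (Dᴴ * D).trace.re = ∑ j, (hD.eigenvalues j) ^ 2 := by
    rw [htr, Complex.ofReal_re]
  have : hsNorm D = Real.sqrt (∑ j, (hD.eigenvalues j) ^ 2) := by
    rw [hsNorm, hre]
  rw [this]
  calc |hD.eigenvalues i| = Real.sqrt ((hD.eigenvalues i) ^ 2) :=
        (Real.sqrt_sq_eq_abs _).symm
    _ ≤ Real.sqrt (∑ j, (hD.eigenvalues j) ^ 2) :=
        Real.sqrt_le_sqrt (Finset.single_le_sum (f := fun j => hD.eigenvalues j ^ 2)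
          (fun j _ => sq_nonneg _) (mem_univ i))

omit hf in
lemma posneg_decomp {D : Mat} (hD : D.IsHermitian) {c : ℝ}
    (hc : ∀ i, |hD.eigenvalues i| ≤ c) :
    ∃ P N : Mat, P.PosSemidef ∧ N.PosSemidef ∧ P - N = D ∧
      (((c : ℝ) : ℂ) • 1 - P).PosSemidef ∧ (((c : ℝ) : ℂ) • 1 - N).PosSemidef := by
  set V : Mat := (hD.eigenvectorUnitary : Mat) with hV
  have hVV : V * star V = 1 := mem_unitaryGroup_iff.mp hD.eigenvectorUnitary.2
  set cdiag : (Fin d → ℝ) → Mat :=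
    fun g => V * diagonal (fun i => ((g i : ℝ) : ℂ)) * star V with hcdiag
  have hpsd : ∀ g : Fin d → ℝ, (∀ i, 0 ≤ g i) → (cdiag g).PosSemidef := by
    intro g hg
    have hdg : (diagonal (fun i => ((g i : ℝ) : ℂ))).PosSemidef :=
      Matrix.PosSemidef.diagonal (fun i => Complex.zero_le_real.mpr (hg i))
    have := hdg.mul_mul_conjTranspose_same V
    simpa [hcdiag, Matrix.star_eq_conjTranspose] using this
  have hsub : ∀ g h : Fin d → ℝ, cdiag g - cdiag h = cdiag (fun i => g i - h i) := by
    intro g h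
    simp only [hcdiag]
    have h2 : diagonal (fun i => ((g i : ℝ) : ℂ)) - diagonal (fun i => ((h i : ℝ) : ℂ))
        = diagonal (fun i => (((g i - h i : ℝ)) : ℂ)) := by
      rw [diagonal_sub]
      congr 1
      funext i
      push_cast
      ring
    rw [← sub_mul, ← mul_sub, h2]
  have hconst : cdiag (fun _ => c) = ((c : ℝ) : ℂ) • 1 := by
    simp only [hcdiag]
    have hdiagc : diagonal (fun _ : Fin d => ((c : ℝ) : ℂ)) = ((c : ℝ) : ℂ) • (1 : Mat) := by
      have hfn : (fun _ : Fin d => ((c : ℝ) : ℂ)) = ((c : ℝ) : ℂ) • (1 : Fin d → ℂ) := by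
        funext i; simp
      rw [hfn, diagonal_smul]
      congr 1
    rw [hdiagc, mul_smul_comm, mul_one, smul_mul_assoc, hVV]
  have hDeq : cdiag hD.eigenvalues = D := by
    simp only [hcdiag]
    exact hD.spectral_theorem.symm
  refine ⟨cdiag (fun i => max (hD.eigenvalues i) 0),
    cdiag (fun i => max (-hD.eigenvalues i) 0),
    hpsd _ (fun i => le_max_right _ _), hpsd _ (fun i => le_max_right _ _), ?_, ?_, ?_⟩
  · rw [hsub]
    have heq : (fun i => max (hD.eigenvalues i) 0 - max (-hD.eigenvalues i) 0)
        = hD.eigenvalues := by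
      funext i
      exact max_zero_sub_max_neg_zero_eq_self _
    rw [heq, hDeq]
  · rw [← hconst, hsub]
    refine hpsd _ (fun i => ?_)
    have h1 := hc i
    have h2 : (0 : ℝ) ≤ c := le_trans (abs_nonneg _) h1
    have h3 : hD.eigenvalues i ≤ c := le_trans (le_abs_self _) h1
    simp only [sub_nonneg]
    exact max_le h3 h2
  · rw [← hconst, hsub]
    refine hpsd _ (fun i => ?_)
    have h1 := hc i
    have h2 : (0 : ℝ) ≤ c := le_trans (abs_nonneg _) h1
    have h3 : -hD.eigenvalues i ≤ c := le_trans (neg_le_abs _) h1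
    simp only [sub_nonneg]
    exact max_le h3 h2

end Helpers

theorem frame_function_continuous {d : ℕ}
    (f : Matrix (Fin d) (Fin d) ℂ → ℝ) (hf : IsFrameFunction f) :
    ∀ E₀ : Matrix (Fin d) (Fin d) ℂ, IsEffect E₀ →
      ∀ ε > (0 : ℝ), ∃ δ > (0 : ℝ),
        ∀ E : Matrix (Fin d) (Fin d) ℂ, IsEffect E →
          hsNorm (E - E₀) < δ → |f E - f E₀| < ε := by
  intro E₀ hE₀ ε hε
  obtain ⟨m, hm⟩ := exists_nat_one_div_lt hε
  refine ⟨(((m + 2 : ℕ) : ℝ))⁻¹, by positivity, ?_⟩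
  intro E hE hnorm
  set n : ℕ := m + 2 with hn
  have hn2 : 2 ≤ n := by omega
  have hD : (E - E₀).IsHermitian := hE.1.1.sub hE₀.1.1
  have hc : ∀ i, |hD.eigenvalues i| ≤ ((n : ℝ)⁻¹) := fun i =>
    le_trans (eig_bound hD i) (le_of_lt hnorm)
  obtain ⟨P, N, hP, hN, hPN, hPt, hNt⟩ := posneg_decomp hD hc
  have hNeq : N = P - (E - E₀) := by rw [← hPN]; abel
  have hPD : (P - (E - E₀)).PosSemidef := by rw [← hNeq]; exact hN
  have hND : (N - (E₀ - E)).PosSemidef := by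
    have heq : N - (E₀ - E) = P := by rw [hNeq]; abel
    rw [heq]; exact hP
  have h1 := key_ineq hf hn2 hE hE₀ hP hPt hPD
  have h2 := key_ineq hf hn2 hE₀ hE hN hNt hND
  have hlt : ((n : ℝ) - 1)⁻¹ < ε := by
    have hcast : ((n : ℝ)) - 1 = (m : ℝ) + 1 := by
      rw [hn]; push_cast; ring
    rw [hcast, ← one_div]
    exact hm
  rw [abs_sub_lt_iff]
  constructor <;> linarith
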